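/- Let M, γ : [0,T) → ℝ be differentiable functions satisfying M'(t) = -M(t)² + f(t) and γ'(t) = -γ(t)M(t), with γ(t) > 0, M(t) ≥ 0, and |f(t)| ≤ F for all t, where F ≥ 0 is constant. Define the Lyapunov function ω(t) = γ(0)γ(t) + (γ(0)/γ(t))(1 + M(t)²), assuming γ(0) > 0. Then ω'(t) ≤ (F + ½)·ω(t), and consequently M(t) ≤ ω(t) ≤ ω(0)e^{(F+½)t} for all t ∈ [0,T). -/

import Mathlib

open Real

/-- The Lyapunov function `ω(t) = γ(0)γ(t) + (γ(0)/γ(t))(1 + M(t)²)`. -/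
noncomputable def lyap (γ M : ℝ → ℝ) (t : ℝ) : ℝ :=
  γ 0 * γ t + γ 0 / γ t * (1 + (M t) ^ 2)

/-- Lyapunov-function bound: if `M' = -M² + f`, `γ' = -γM`, `γ > 0`, `M ≥ 0`, `|f| ≤ F`,
then `ω' ≤ (F + ½)ω` and `M(t) ≤ ω(t) ≤ ω(0) e^{(F+½)t}`. -/
theorem lyapunov_slope_bound (T F : ℝ) (hF : 0 ≤ F) (M γ f : ℝ → ℝ) (hγ0 : 0 < γ 0)
    (hM : ∀ t ∈ Set.Ico 0 T, HasDerivAt M (-(M t) ^ 2 + f t) t)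
    (hγ : ∀ t ∈ Set.Ico 0 T, HasDerivAt γ (-(γ t * M t)) t)
    (hγpos : ∀ t ∈ Set.Ico 0 T, 0 < γ t)
    (hMpos : ∀ t ∈ Set.Ico 0 T, 0 ≤ M t)
    (hf : ∀ t ∈ Set.Ico 0 T, |f t| ≤ F) :
    ∀ t ∈ Set.Ico 0 T,
      deriv (lyap γ M) t ≤ (F + 1/2) * lyap γ M t ∧
      M t ≤ lyap γ M t ∧
      lyap γ M t ≤ lyap γ M 0 * Real.exp ((F + 1/2) * t) := by
  set K : ℝ := F + 1/2 with hK
  -- derivative of lyap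
  have hD : ∀ t ∈ Set.Ico 0 T, HasDerivAt (lyap γ M)
      (γ 0 * M t / γ t * (1 - (M t) ^ 2 + 2 * f t) - γ 0 * (γ t * M t)) t := by
    intro t ht
    have hγt := hγpos t ht
    have h1 : HasDerivAt (fun s => γ 0 * γ s) (γ 0 * (-(γ t * M t))) t :=
      (hγ t ht).const_mul _
    have h2 : HasDerivAt (fun s => γ 0 / γ s)
        ((0 * γ t - γ 0 * (-(γ t * M t))) / γ t ^ 2) t :=
      (hasDerivAt_const t (γ 0)).div (hγ t ht) hγt.ne'
    have h3 : HasDerivAt (fun s => 1 + (M s) ^ 2)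
        ((2 : ℕ) * M t ^ 1 * (-(M t) ^ 2 + f t)) t :=
      (((hM t ht).pow 2)).const_add 1
    have h4 := h1.add (h2.mul h3)
    refine h4.congr_deriv ?_
    field_simp
    ring
  -- derivative inequality
  have hineq : ∀ t ∈ Set.Ico 0 T,
      γ 0 * M t / γ t * (1 - (M t) ^ 2 + 2 * f t) - γ 0 * (γ t * M t) ≤ K * lyap γ M t := by
    intro t ht
    have hγt := hγpos t ht
    have hMt := hMpos t ht
    have hfF := abs_le.1 (hf t ht)
    have hb : 0 < γ 0 / γ t := div_pos hγ0 hγt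
    have e1 : γ 0 * M t / γ t = (γ 0 / γ t) * M t := by ring
    rw [lyap, e1]
    nlinarith [mul_nonneg hb.le (sq_nonneg (M t - 1)), mul_nonneg hγ0.le (mul_nonneg hγt.le hMt),
      mul_nonneg (mul_nonneg hb.le hMt) (sq_nonneg (M t)),
      mul_nonneg hb.le hMt, mul_nonneg (mul_nonneg hb.le hMt) (sub_nonneg.2 hfF.2),
      mul_nonneg hF (mul_nonneg hγ0.le hγt.le), mul_pos hγ0 hγt,
      mul_nonneg (mul_nonneg hb.le hF) (sq_nonneg (M t - 1))]
  intro t ht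
  obtain ⟨ht0, htT⟩ := ht
  have ht' : t ∈ Set.Ico 0 T := ⟨ht0, htT⟩
  have h0T : (0 : ℝ) ∈ Set.Ico 0 T := ⟨le_refl 0, lt_of_le_of_lt ht0 htT⟩
  have hγt := hγpos t ht'
  have hMt := hMpos t ht'
  -- γ is antitone on Ico 0 T
  have hanti : AntitoneOn γ (Set.Ico 0 T) := by
    apply antitoneOn_of_hasDerivWithinAt_nonpos (convex_Ico 0 T)
      (fun s hs => ((hγ s hs).continuousAt).continuousWithinAt)
      (f' := fun s => -(γ s * M s))
    · intro s hs
      rw [interior_Ico] at hs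
      exact ((hγ s ⟨hs.1.le, hs.2⟩).hasDerivWithinAt)
    · intro s hs
      rw [interior_Ico] at hs
      have hs' : s ∈ Set.Ico 0 T := ⟨hs.1.le, hs.2⟩
      exact neg_nonpos.2 (mul_nonneg (hγpos s hs').le (hMpos s hs'))
  have hγle : γ t ≤ γ 0 := hanti h0T ht' ht0
  refine ⟨?_, ?_, ?_⟩
  · rw [(hD t ht').deriv]
    exact hineq t ht'
  · -- M t ≤ lyap
    have key : γ t * lyap γ M t = γ 0 * γ t ^ 2 + γ 0 * (1 + (M t) ^ 2) := by
      rw [lyap]; field_simp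
    have h2 : γ t * M t ≤ γ t * lyap γ M t := by
      rw [key]
      nlinarith [mul_pos hγ0 (pow_pos hγt 2), sq_nonneg (M t - 1),
        mul_nonneg (sub_nonneg.2 hγle) (sq_nonneg (M t)), sq_nonneg (M t - γ t)]
    exact le_of_mul_le_mul_left h2 hγt
  · -- Gronwall via antitone of ω e^{-Kt}
    have hanti2 : AntitoneOn (fun s => lyap γ M s * Real.exp (-(K * s))) (Set.Ico 0 T) := by
      apply antitoneOn_of_hasDerivWithinAt_nonpos (convex_Ico 0 T)
        (f' := fun s => (γ 0 * M s / γ s * (1 - (M s) ^ 2 + 2 * f s) - γ 0 * (γ s * M s))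
            * Real.exp (-(K * s)) + lyap γ M s * (-K * Real.exp (-(K * s))))
      · intro s hs
        exact ((hD s hs).continuousAt.mul
          (Real.continuous_exp.comp (continuous_const.mul continuous_id).neg).continuousAt).continuousWithinAt
      · intro s hs
        rw [interior_Ico] at hs
        have hs' : s ∈ Set.Ico 0 T := ⟨hs.1.le, hs.2⟩
        have hexp : HasDerivAt (fun s => Real.exp (-(K * s))) (-K * Real.exp (-(K * s))) s := by
          have := (Real.hasDerivAt_exp (-(K * s))).comp s
            (((hasDerivAt_id s).const_mul K).neg)
          refine this.congr_deriv ?_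
          ring
        exact (((hD s hs').mul hexp).congr_deriv (by ring)).hasDerivWithinAt
      · intro s hs
        rw [interior_Ico] at hs
        have hs' : s ∈ Set.Ico 0 T := ⟨hs.1.le, hs.2⟩
        have h1 := hineq s hs'
        have hexp : (0:ℝ) < Real.exp (-(K * s)) := Real.exp_pos _
        nlinarith [mul_le_mul_of_nonneg_right h1 hexp.le]
    have h2 := hanti2 h0T ht' ht0
    simp only [mul_zero, neg_zero, Real.exp_zero, mul_one] at h2
    have hexp : (0:ℝ) < Real.exp (K * t) := Real.exp_pos _
    calc lyap γ M t = (lyap γ M t * Real.exp (-(K * t))) * Real.exp (K * t) := by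
          rw [mul_assoc, ← Real.exp_add]; simp
      _ ≤ lyap γ M 0 * Real.exp (K * t) := by
          exact mul_le_mul_of_nonneg_right h2 hexp.le
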